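/- arXiv:2104.14766 — 5 statements merged into one kernel-verified Lean document; each statement's English description precedes it below -/
import Mathlib

section
/- Let A be a finite set of positive integers such that Σ(A) contains every integer in the interval [x, x+y). Suppose a₁, …, a_s are positive integers not in A satisfying a_i ≤ y + ∑_{j<i} a_j for each i = 1,…,s. Then Σ(A ∪ {a₁,…,a_s}) contains every integer in the interval [x, x + y + ∑_{i=1}^s a_i). -/
/-- The set of integers representable as a sum of distinct elements of the finite set `A`. -/
def subsetSums (A : Finset ℕ) : Set ℕ :=
  {z | ∃ S : Finset ℕ, S ⊆ A ∧ ∑ s ∈ S, s = z}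

lemma subsetSums_mono {A B : Finset ℕ} (h : A ⊆ B) : subsetSums A ⊆ subsetSums B := by
  rintro z ⟨S, hS, rfl⟩
  exact ⟨S, hS.trans h, rfl⟩

lemma step (B : Finset ℕ) (x y c : ℕ) (hc : c ∉ B) (hcy : c ≤ y)
    (h : ∀ z : ℕ, x ≤ z → z < x + y → z ∈ subsetSums B) :
    ∀ z : ℕ, x ≤ z → z < x + y + c → z ∈ subsetSums (insert c B) := by
  intro z hz1 hz2
  by_cases hz : z < x + y
  · exact subsetSums_mono (Finset.subset_insert _ _) (h z hz1 hz)
  · push_neg at hz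
    have hcz : c ≤ z := le_trans (le_trans hcy (Nat.le_add_left _ _)) hz
    have h1 : x ≤ z - c := by omega
    have h2 : z - c < x + y := by omega
    obtain ⟨S, hS, hsum⟩ := h (z - c) h1 h2
    refine ⟨insert c S, ?_, ?_⟩
    · exact Finset.insert_subset_insert _ hS
    · rw [Finset.sum_insert (fun hmem => hc (hS hmem))]
      omega

/-- Graham's lemma: if `Σ(A)` contains every integer in `[x, x+y)` and `a₁,…,a_s` are
distinct positive integers not in `A` with `a_i ≤ y + ∑_{j<i} a_j` for each `i`, then
`Σ(A ∪ {a₁,…,a_s})` contains every integer in `[x, x + y + ∑ a_i)`. -/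
theorem stmt10 (A : Finset ℕ) (hA : ∀ b ∈ A, 0 < b) (x y : ℕ)
    (hxy : ∀ z : ℕ, x ≤ z → z < x + y → z ∈ subsetSums A)
    (s : ℕ) (a : Fin s → ℕ) (hapos : ∀ i, 0 < a i)
    (hainj : Function.Injective a) (hanotin : ∀ i, a i ∉ A)
    (hale : ∀ i : Fin s, a i ≤ y + ∑ j ∈ Finset.univ.filter (fun j => j < i), a j) :
    ∀ z : ℕ, x ≤ z → z < x + y + ∑ i, a i →
      z ∈ subsetSums (A ∪ Finset.image a Finset.univ) := by
  induction s with
  | zero =>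
    intro z hz1 hz2
    simp only [Finset.univ_eq_empty, Finset.sum_empty] at hz2
    exact subsetSums_mono Finset.subset_union_left (hxy z hz1 (by omega))
  | succ n ih =>
    set a' : Fin n → ℕ := fun i => a i.castSucc with ha'
    have hfilt : ∀ i : Fin n,
        (Finset.univ.filter (fun j => j < i.castSucc)).sum a
        = (Finset.univ.filter (fun j => j < i)).sum a' := by
      intro i
      have hset : Finset.univ.filter (fun j => j < i.castSucc)
          = (Finset.univ.filter (fun j => j < i)).map Fin.castSuccEmb := by
        ext j
        simp only [Finset.mem_map, Finset.mem_filter, Finset.mem_univ, true_and,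
          Fin.castSuccEmb_apply]
        constructor
        · intro hj
          have hjlast : j ≠ Fin.last n := by
            intro hjl
            subst hjl
            exact absurd hj (not_lt.mpr (Fin.castSucc_lt_last i).le)
          obtain ⟨k, rfl⟩ := Fin.exists_castSucc_eq.mpr hjlast
          exact ⟨k, Fin.castSucc_lt_castSucc_iff.mp hj, rfl⟩
        · rintro ⟨k, hk, rfl⟩
          exact Fin.castSucc_lt_castSucc_iff.mpr hk
      rw [hset, Finset.sum_map]
      rfl
    have key := ih a' (fun i => hapos _)
      (fun i j hij => Fin.castSucc_injective n (hainj hij))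
      (fun i => hanotin _)
      (fun i => by
        have := hale i.castSucc
        rwa [hfilt i] at this)
    -- now add a (last n)
    have hlastsum : (Finset.univ.filter (fun j => j < Fin.last n)).sum a
        = ∑ i : Fin n, a' i := by
      have hset : Finset.univ.filter (fun j => j < Fin.last n)
          = (Finset.univ : Finset (Fin n)).map Fin.castSuccEmb := by
        ext j
        simp only [Finset.mem_map, Finset.mem_filter, Finset.mem_univ, true_and,
          Fin.castSuccEmb_apply]
        constructor
        · intro hj
          obtain ⟨k, rfl⟩ := Fin.exists_castSucc_eq.mpr hj.ne
          exact ⟨k, rfl⟩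
        · rintro ⟨k, rfl⟩
          exact Fin.castSucc_lt_last k
      rw [hset, Finset.sum_map]
      rfl
    have hcnot : a (Fin.last n) ∉ A ∪ Finset.image a' Finset.univ := by
      simp only [Finset.mem_union, Finset.mem_image, Finset.mem_univ, true_and, not_or]
      refine ⟨hanotin _, ?_⟩
      rintro ⟨k, hk⟩
      have := hainj hk
      exact absurd this (Fin.castSucc_lt_last k).ne
    have hcle : a (Fin.last n) ≤ y + ∑ i : Fin n, a' i := by
      have := hale (Fin.last n)
      rwa [hlastsum] at this
    have hset : insert (a (Fin.last n)) (A ∪ Finset.image a' Finset.univ)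
        = A ∪ Finset.image a Finset.univ := by
      ext b
      simp only [Finset.mem_insert, Finset.mem_union, Finset.mem_image, Finset.mem_univ,
        true_and]
      constructor
      · rintro (rfl | hb | ⟨k, rfl⟩)
        · exact Or.inr ⟨Fin.last n, rfl⟩
        · exact Or.inl hb
        · exact Or.inr ⟨k.castSucc, rfl⟩
      · rintro (hb | ⟨k, rfl⟩)
        · exact Or.inr (Or.inl hb)
        · rcases Fin.eq_castSucc_or_eq_last k with ⟨j, rfl⟩ | rfl
          · exact Or.inr (Or.inr ⟨j, rfl⟩)
          · exact Or.inl rfl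
    intro z hz1 hz2
    rw [← hset]
    refine step _ x (y + ∑ i : Fin n, a' i) (a (Fin.last n)) hcnot hcle
      (fun w h1 h2 => key w h1 (by omega)) z hz1 ?_
    rw [Fin.sum_univ_castSucc] at hz2
    have hss : ∑ i : Fin n, a' i = ∑ i : Fin n, a i.castSucc := rfl
    omega
end

section
/- Let m be a positive integer and let A be a finite set of integers with m ∉ A. If the image of Σ(A) under reduction modulo m has at least h elements, then |Σ(A ∪ {m})| ≥ |Σ(A)| + h. -/
/-- The finite set of integers representable as a sum of distinct elements of `A`. -/
def subsetSumsZ (A : Finset ℤ) : Finset ℤ :=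
  A.powerset.image (fun S => ∑ x ∈ S, x)

lemma subsetSumsZ_insert (a : ℤ) (A : Finset ℤ) (ha : a ∉ A) :
    subsetSumsZ (insert a A) = subsetSumsZ A ∪ (subsetSumsZ A).image (fun z => z + a) := by
  unfold subsetSumsZ
  rw [Finset.powerset_insert, Finset.image_union, Finset.image_image, Finset.image_image]
  congr 1
  apply Finset.image_congr
  intro S hS
  simp only [Finset.mem_coe, Finset.mem_powerset] at hS
  have haS : a ∉ S := fun h => ha (hS h)
  simp [Finset.sum_insert haS, add_comm]

/-- If `m` is a positive integer, `A` a finite set of integers with `m ∉ A`, and the image of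
`Σ(A)` modulo `m` has at least `h` elements, then `|Σ(A ∪ {m})| ≥ |Σ(A)| + h`. -/
theorem stmt11 (m : ℕ) (hm : 0 < m) (A : Finset ℤ) (hmA : (m : ℤ) ∉ A) (h : ℕ)
    (hcard : h ≤ ((subsetSumsZ A).image (fun z : ℤ => (z : ZMod m))).card) :
    (subsetSumsZ A).card + h ≤ (subsetSumsZ (insert (m : ℤ) A)).card := by
  classical
  set S := subsetSumsZ A with hSdef
  set T := S.image (fun z => z + (m : ℤ)) with hTdef
  have heq : subsetSumsZ (insert (m : ℤ) A) = S ∪ T := subsetSumsZ_insert _ _ hmA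
  rw [heq, ← Finset.union_sdiff_self_eq_union,
    Finset.card_union_of_disjoint Finset.disjoint_sdiff]
  have hcastm : (((m : ℤ) : ZMod m)) = 0 := by
    push_cast
    exact ZMod.natCast_self m
  have key : (S.image (fun z : ℤ => (z : ZMod m))).card ≤ (T \ S).card := by
    apply Finset.card_le_card_of_injOn
      (fun r => if hr : (S.filter (fun z : ℤ => (z : ZMod m) = r)).Nonempty then
          (S.filter (fun z : ℤ => (z : ZMod m) = r)).max' hr + m else 0)
    · intro r hr
      simp only [Finset.mem_coe, Finset.mem_image] at hr ⊢
      obtain ⟨z, hz, hzr⟩ := hr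
      have hne : (S.filter (fun z : ℤ => (z : ZMod m) = r)).Nonempty :=
        ⟨z, Finset.mem_filter.mpr ⟨hz, hzr⟩⟩
      simp only [dif_pos hne]
      have hmax := Finset.max'_mem _ hne
      rw [Finset.mem_filter] at hmax
      rw [Finset.mem_sdiff]
      constructor
      · exact Finset.mem_image.mpr ⟨_, hmax.1, rfl⟩
      · intro hmem
        have hres : (((S.filter (fun z : ℤ => (z : ZMod m) = r)).max' hne + m : ℤ) : ZMod m) = r := by
          push_cast [hcastm]
          simpa using hmax.2
        have : (S.filter (fun z : ℤ => (z : ZMod m) = r)).max' hne + m ∈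
            S.filter (fun z : ℤ => (z : ZMod m) = r) := Finset.mem_filter.mpr ⟨hmem, hres⟩
        have hle := Finset.le_max' _ _ this
        have : (0 : ℤ) < m := by exact_mod_cast hm
        omega
    · intro r1 hr1 r2 hr2 hfeq
      simp only [Finset.coe_image, Set.mem_image] at hr1 hr2
      obtain ⟨z1, hz1, hz1r⟩ := hr1
      obtain ⟨z2, hz2, hz2r⟩ := hr2
      rw [Finset.mem_coe] at hz1 hz2
      have hne1 : (S.filter (fun z : ℤ => (z : ZMod m) = r1)).Nonempty :=
        ⟨z1, Finset.mem_filter.mpr ⟨hz1, hz1r⟩⟩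
      have hne2 : (S.filter (fun z : ℤ => (z : ZMod m) = r2)).Nonempty :=
        ⟨z2, Finset.mem_filter.mpr ⟨hz2, hz2r⟩⟩
      simp only [dif_pos hne1, dif_pos hne2] at hfeq
      have hmax1 := Finset.max'_mem _ hne1
      have hmax2 := Finset.max'_mem _ hne2
      rw [Finset.mem_filter] at hmax1 hmax2
      have := congrArg (fun z : ℤ => (z : ZMod m)) hfeq
      simp only [Int.cast_add, hcastm, add_zero] at this
      rw [hmax1.2, hmax2.2] at this
      exact this
  have hh : h ≤ (T \ S).card := le_trans hcard key
  omega
end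

section
/- Let m and d be positive integers and let A ⊆ ℤ_m with d < |A| < m. Let G_d be the set of x ∈ ℤ_m such that |(A + x) ∪ A| ≤ |A| + d. Then |G_d| ≤ |A|² / (|A| − d). -/
/-- Let `m, d` be positive integers and `A ⊆ ℤ_m` with `d < |A| < m`. If `G_d` is the set of
`x ∈ ℤ_m` with `|(A + x) ∪ A| ≤ |A| + d`, then `|G_d| ≤ |A|²/(|A| − d)`. -/
theorem stmt12 (m : ℕ) (hm : 0 < m) (d : ℕ) (hd : 0 < d) (A : Finset (ZMod m))
    (h1 : d < A.card) (h2 : A.card < m) :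
    ({x : ZMod m | (A.image (· + x) ∪ A).card ≤ A.card + d}.ncard : ℝ) ≤
      (A.card : ℝ) ^ 2 / ((A.card : ℝ) - (d : ℝ)) := by
  haveI : NeZero m := ⟨hm.ne'⟩
  set G : Finset (ZMod m) :=
    Finset.univ.filter (fun x => (A.image (· + x) ∪ A).card ≤ A.card + d) with hG
  have hset : {x : ZMod m | (A.image (· + x) ∪ A).card ≤ A.card + d} = (G : Set (ZMod m)) := by
    ext x; simp [hG]
  rw [hset, Set.ncard_coe_finset]
  -- inter description
  have hinter : ∀ x : ZMod m, A.image (· + x) ∩ A = A.filter (fun b => b - x ∈ A) := by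
    intro x
    ext b
    simp only [Finset.mem_inter, Finset.mem_image, Finset.mem_filter]
    constructor
    · rintro ⟨⟨a, ha, rfl⟩, hb⟩
      simpa using ⟨hb, ha⟩
    · rintro ⟨hb, ha⟩
      exact ⟨⟨b - x, ha, by ring⟩, hb⟩
  -- total count
  have htot : ∑ x : ZMod m, (A.image (· + x) ∩ A).card = A.card * A.card := by
    simp only [hinter, Finset.card_filter]
    rw [Finset.sum_comm]
    have : ∀ b : ZMod m, ∑ x : ZMod m, (if b - x ∈ A then 1 else 0) = A.card := by
      intro b
      rw [Fintype.sum_equiv (Equiv.subLeft b) _ (fun y => if y ∈ A then 1 else 0)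
        (fun x => by simp)]
      simp [Finset.sum_ite_mem]
    calc ∑ b ∈ A, ∑ x : ZMod m, (if b - x ∈ A then 1 else 0)
        = ∑ b ∈ A, A.card := by exact Finset.sum_congr rfl fun b _ => this b
      _ = A.card * A.card := by rw [Finset.sum_const, smul_eq_mul]
  -- each x in G has large intersection
  have hlow : ∀ x ∈ G, A.card - d ≤ (A.image (· + x) ∩ A).card := by
    intro x hx
    rw [hG, Finset.mem_filter] at hx
    have hu := Finset.card_union_add_card_inter (A.image (· + x)) A
    have himg : (A.image (· + x)).card = A.card :=
      Finset.card_image_of_injective _ (add_left_injective x)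
    omega
  have hnat : G.card * (A.card - d) ≤ A.card * A.card := by
    calc G.card * (A.card - d) = ∑ _x ∈ G, (A.card - d) := by
          rw [Finset.sum_const, smul_eq_mul]
      _ ≤ ∑ x ∈ G, (A.image (· + x) ∩ A).card := Finset.sum_le_sum hlow
      _ ≤ ∑ x : ZMod m, (A.image (· + x) ∩ A).card :=
          Finset.sum_le_sum_of_subset (Finset.subset_univ G)
      _ = A.card * A.card := htot
  have hpos : (0 : ℝ) < (A.card : ℝ) - d := by
    have : (d : ℝ) < A.card := by exact_mod_cast h1
    linarith
  rw [le_div_iff₀ hpos]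
  have : ((G.card * (A.card - d) : ℕ) : ℝ) ≤ ((A.card * A.card : ℕ) : ℝ) := by
    exact_mod_cast hnat
  rw [Nat.cast_mul, Nat.cast_sub h1.le, Nat.cast_mul] at this
  nlinarith [this]
end

section
/- Let S be a set of positive integers and let m and q be positive integers. Then |Σ(S) ∩ [m]| ≤ 2^{m/q} · ∏_{a ∈ S ∩ [m]} (1 + 2^{−a/q}) ≤ 2^{m/q} · exp( ∑_{a ∈ S ∩ [m]} 2^{−a/q} ). -/
open Classical

/-- The set of integers representable as a sum, of distinct elements, of the (possibly
infinite) set `S` of positive integers. -/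
def subsetSumsSet (S : Set ℕ) : Set ℕ :=
  {z | ∃ T : Finset ℕ, ↑T ⊆ S ∧ ∑ a ∈ T, a = z}

/-- Let `S` be a set of positive integers and `m, q` positive integers. Then
`|Σ(S) ∩ [m]| ≤ 2^{m/q} · ∏_{a ∈ S ∩ [m]} (1 + 2^{−a/q})
             ≤ 2^{m/q} · exp(∑_{a ∈ S ∩ [m]} 2^{−a/q})`. -/
theorem stmt15 (S : Set ℕ) (hS : ∀ a ∈ S, 0 < a) (m q : ℕ) (hm : 0 < m) (hq : 0 < q) :
    ((subsetSumsSet S ∩ Set.Icc 1 m).ncard : ℝ) ≤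
      (2 : ℝ) ^ ((m : ℝ) / (q : ℝ)) *
        ∏ a ∈ Finset.filter (fun a => a ∈ S) (Finset.Icc 1 m),
          (1 + (2 : ℝ) ^ (-((a : ℝ) / (q : ℝ)))) ∧
    (2 : ℝ) ^ ((m : ℝ) / (q : ℝ)) *
        ∏ a ∈ Finset.filter (fun a => a ∈ S) (Finset.Icc 1 m),
          (1 + (2 : ℝ) ^ (-((a : ℝ) / (q : ℝ)))) ≤
      (2 : ℝ) ^ ((m : ℝ) / (q : ℝ)) *
        Real.exp (∑ a ∈ Finset.filter (fun a => a ∈ S) (Finset.Icc 1 m),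
          (2 : ℝ) ^ (-((a : ℝ) / (q : ℝ)))) := by
  set F := Finset.filter (fun a => a ∈ S) (Finset.Icc 1 m) with hF
  have h2 : (0:ℝ) < 2 := by norm_num
  constructor
  · -- main counting bound
    set A : Finset ℕ := (Finset.Icc 1 m).filter (fun z => z ∈ subsetSumsSet S) with hA
    have hncard : (subsetSumsSet S ∩ Set.Icc 1 m).ncard = A.card := by
      rw [hA]
      rw [show (subsetSumsSet S ∩ Set.Icc 1 m) =
        ↑((Finset.Icc 1 m).filter (fun z => z ∈ subsetSumsSet S)) by
        ext z; simp only [Set.mem_inter_iff, Finset.coe_filter, Set.mem_Icc,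
          Set.mem_setOf_eq, Finset.mem_Icc]; tauto]
      exact Set.ncard_coe_finset _
    rw [hncard]
    -- choice function
    let e : ℕ → Finset ℕ := fun z =>
      if h : ∃ T : Finset ℕ, ↑T ⊆ S ∧ ∑ a ∈ T, a = z then h.choose else ∅
    have he : ∀ z ∈ A, ↑(e z) ⊆ S ∧ ∑ a ∈ e z, a = z := by
      intro z hz
      rw [hA, Finset.mem_filter] at hz
      obtain ⟨_, hz2⟩ := hz
      rw [show e z = hz2.choose from dif_pos hz2]
      exact hz2.choose_spec
    have heF : ∀ z ∈ A, e z ∈ F.powerset := by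
      intro z hz
      obtain ⟨hsub, hsum⟩ := he z hz
      have hzm : z ∈ Finset.Icc 1 m := (Finset.mem_filter.mp hz).1
      rw [Finset.mem_Icc] at hzm
      rw [Finset.mem_powerset, hF]
      intro a ha
      rw [Finset.mem_filter, Finset.mem_Icc]
      have haS : a ∈ S := hsub ha
      have hale : a ≤ z := hsum ▸ Finset.single_le_sum (fun i _ => Nat.zero_le i) ha
      exact ⟨⟨hS a haS, hale.trans hzm.2⟩, haS⟩
    have hinj : ∀ x ∈ A, ∀ y ∈ A, e x = e y → x = y := by
      intro x hx y hy hxy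
      have h1 := (he x hx).2
      rw [hxy, (he y hy).2] at h1
      exact h1.symm
    have hPnonneg : ∀ t : Finset ℕ, (0:ℝ) ≤ ∏ a ∈ t, (2:ℝ) ^ (-((a:ℝ)/(q:ℝ))) := by
      intro t; positivity
    have key : (A.card : ℝ) * (2:ℝ) ^ (-((m:ℝ)/(q:ℝ))) ≤
        ∏ a ∈ F, (1 + (2:ℝ) ^ (-((a:ℝ)/(q:ℝ)))) := by
      calc (A.card : ℝ) * (2:ℝ) ^ (-((m:ℝ)/(q:ℝ)))
          = ∑ _z ∈ A, (2:ℝ) ^ (-((m:ℝ)/(q:ℝ))) := by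
            rw [Finset.sum_const, nsmul_eq_mul]
        _ ≤ ∑ z ∈ A, (2:ℝ) ^ (-((z:ℝ)/(q:ℝ))) := by
            apply Finset.sum_le_sum
            intro z hz
            apply Real.rpow_le_rpow_of_exponent_le (by norm_num)
            have hzm : z ∈ Finset.Icc 1 m := (Finset.mem_filter.mp hz).1
            rw [Finset.mem_Icc] at hzm
            have hzm' : (z:ℝ) ≤ (m:ℝ) := by exact_mod_cast hzm.2
            have hq' : (0:ℝ) < q := by exact_mod_cast hq
            have : (z:ℝ)/(q:ℝ) ≤ (m:ℝ)/(q:ℝ) := by gcongr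
            linarith
        _ = ∑ z ∈ A, ∏ a ∈ e z, (2:ℝ) ^ (-((a:ℝ)/(q:ℝ))) := by
            apply Finset.sum_congr rfl
            intro z hz
            rw [← Real.rpow_sum_of_pos h2]
            congr 1
            have hzq : (z:ℝ) = ∑ a ∈ e z, (a:ℝ) := by
              rw [← Nat.cast_sum, (he z hz).2]
            rw [hzq, Finset.sum_div, ← Finset.sum_neg_distrib]
        _ = ∑ t ∈ A.image e, ∏ a ∈ t, (2:ℝ) ^ (-((a:ℝ)/(q:ℝ))) := by
            rw [Finset.sum_image hinj]
        _ ≤ ∑ t ∈ F.powerset, ∏ a ∈ t, (2:ℝ) ^ (-((a:ℝ)/(q:ℝ))) := by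
            apply Finset.sum_le_sum_of_subset_of_nonneg
            · intro t ht
              obtain ⟨z, hz, rfl⟩ := Finset.mem_image.mp ht
              exact heF z hz
            · intro t _ _; exact hPnonneg t
        _ = ∏ a ∈ F, (1 + (2:ℝ) ^ (-((a:ℝ)/(q:ℝ)))) := by
            simp only [show ∀ x : ℝ, 1 + x = x + 1 from fun x => add_comm 1 x]
            rw [Finset.prod_add]
            apply Finset.sum_congr rfl
            intro t _
            simp
    have hpos : (0:ℝ) < (2:ℝ) ^ ((m:ℝ)/(q:ℝ)) := Real.rpow_pos_of_pos h2 _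
    have h3 := mul_le_mul_of_nonneg_right key hpos.le
    rw [mul_assoc, ← Real.rpow_add h2, neg_add_cancel, Real.rpow_zero, mul_one] at h3
    calc ((A.card : ℕ) : ℝ) ≤ (∏ a ∈ F, (1 + (2:ℝ) ^ (-((a:ℝ)/(q:ℝ))))) *
          (2:ℝ) ^ ((m:ℝ)/(q:ℝ)) := h3
      _ = _ := mul_comm _ _
  · -- exp bound
    apply mul_le_mul_of_nonneg_left _ (Real.rpow_nonneg (by norm_num) _)
    rw [Real.exp_sum]
    apply Finset.prod_le_prod
    · intro a _; positivity
    · intro a _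
      rw [add_comm]
      exact Real.add_one_le_exp _
end

section
/- Let ε > 0. If A = (a_n)_{n≥1} is a monotonically increasing sequence of positive integers which is ε-complete, then there exists a constant C such that a_n ≤ ∑_{i ≤ εn + C} a_i holds for all positive integers n. -/
/-- The subsequence of `a` indexed by `I` is complete: every sufficiently large positive
integer is a sum of distinct terms of the subsequence. -/
def seqComplete (a : ℕ → ℕ) (I : Set ℕ) : Prop :=
  ∃ N : ℕ, ∀ z : ℕ, N ≤ z → ∃ S : Finset ℕ, ↑S ⊆ I ∧ ∑ i ∈ S, a i = z

/-- The number of terms of the subsequence of `a` indexed by `I` whose value is at most `n`. -/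
noncomputable def seqCount (a : ℕ → ℕ) (I : Set ℕ) (n : ℕ) : ℕ :=
  {i | i ∈ I ∧ a i ≤ n}.ncard

/-- The sequence `(a_n)_{n ≥ 1}` is `ε`-complete: every subsequence `A'` with
`|A' ∩ [n]| ≥ ε·|A ∩ [n]|` for all sufficiently large `n` is complete. -/
def EpsComplete (ε : ℝ) (a : ℕ → ℕ) : Prop :=
  ∀ J : Set ℕ, J ⊆ Set.Ici 1 →
    (∃ N : ℕ, ∀ n : ℕ, N ≤ n →
      ε * (seqCount a (Set.Ici 1) n : ℝ) ≤ (seqCount a J n : ℝ)) →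
    seqComplete a J

/-- Let `ε > 0`. If `A = (a_n)_{n≥1}` is a monotonically increasing sequence of positive
integers which is `ε`-complete, then there is a constant `C` such that
`a_n ≤ ∑_{i ≤ εn + C} a_i` for all positive integers `n`. -/
theorem stmt17 (ε : ℝ) (hε : 0 < ε) (a : ℕ → ℕ)
    (hpos : ∀ n : ℕ, 1 ≤ n → 0 < a n)
    (hmono : ∀ i j : ℕ, 1 ≤ i → i ≤ j → a i ≤ a j)
    (hec : EpsComplete ε a) :
    ∃ C : ℝ, 0 ≤ C ∧ ∀ n : ℕ, 1 ≤ n →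
      a n ≤ ∑ i ∈ Finset.Icc 1 ⌊ε * (n : ℝ) + C⌋₊, a i := by
  classical
  have hsum_card : ∀ B : ℕ, B ≤ ∑ i ∈ Finset.Icc 1 B, a i := by
    intro B
    calc B = ∑ i ∈ Finset.Icc 1 B, 1 := by simp
    _ ≤ ∑ i ∈ Finset.Icc 1 B, a i :=
        Finset.sum_le_sum (fun i hi => hpos i (Finset.mem_Icc.mp hi).1)
  rcases le_or_gt 1 ε with hε1 | hε1
  · refine ⟨0, le_refl 0, fun n hn => ?_⟩
    have hnn : n ≤ ⌊ε * (n:ℝ) + 0⌋₊ := by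
      refine Nat.le_floor ?_
      have h0 : (0:ℝ) ≤ (n:ℝ) := Nat.cast_nonneg n
      nlinarith
    exact Finset.single_le_sum (f := a) (fun i _ => Nat.zero_le _)
      (Finset.mem_Icc.mpr ⟨hn, hnn⟩)
  by_cases hb : ∃ c : ℕ, ∀ n : ℕ, 1 ≤ n → a n ≤ c
  · obtain ⟨c, hc⟩ := hb
    refine ⟨c, Nat.cast_nonneg c, fun n hn => ?_⟩
    have h1 : c ≤ ⌊ε * (n:ℝ) + c⌋₊ := by
      refine Nat.le_floor ?_
      have : (0:ℝ) ≤ ε * n := by positivity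
      linarith
    calc a n ≤ c := hc n hn
    _ ≤ ⌊ε * (n:ℝ) + c⌋₊ := h1
    _ ≤ _ := hsum_card _
  push_neg at hb
  by_contra hcon
  push_neg at hcon
  -- key: bad n above any bound
  have key : ∀ C : ℝ, 0 ≤ C → ∀ M : ℕ, ∃ n : ℕ, M < n ∧
      (∑ i ∈ Finset.Icc 1 ⌊ε * (n:ℝ) + C⌋₊, a i) < a n := by
    intro C hC M
    obtain ⟨n, hn1, hn2⟩ := hcon (C + a (M+1)) (by positivity)
    have hmonosum : (∑ i ∈ Finset.Icc 1 ⌊ε * (n:ℝ) + C⌋₊, a i) < a n := by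
      refine lt_of_le_of_lt ?_ hn2
      refine Finset.sum_le_sum_of_subset (Finset.Icc_subset_Icc_right ?_)
      refine Nat.floor_mono ?_
      have : (0:ℝ) ≤ (a (M+1) : ℝ) := Nat.cast_nonneg _
      linarith
    refine ⟨n, ?_, hmonosum⟩
    by_contra hnM
    push_neg at hnM
    have h3 : a n ≤ a (M+1) := hmono n (M+1) hn1 (by omega)
    have h4 : a (M+1) ≤ ⌊ε * (n:ℝ) + (C + a (M+1))⌋₊ := by
      refine Nat.le_floor ?_
      have : (0:ℝ) ≤ ε * n + C := by positivity
      linarith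
    have h5 := hsum_card ⌊ε * (n:ℝ) + (C + a (M+1))⌋₊
    omega
  -- construction
  have hstep0 : ∀ s : ℕ, ∃ n : ℕ, ⌈((2 + 2*s : ℕ) : ℝ)/(1-ε)⌉₊ < n ∧
      (∑ i ∈ Finset.Icc 1 ⌊ε * (n:ℝ) + (3 + (s:ℝ))⌋₊, a i) < a n := by
    intro s
    exact key (3 + (s:ℝ)) (by positivity) _
  choose step hstepM hstepS using hstep0
  set S : ℕ → ℕ := fun k => Nat.rec 0 (fun _ ih => ih + step ih) k with hSdef
  have hSsucc : ∀ k, S (k+1) = S k + step (S k) := fun k => rfl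
  set N : ℕ → ℕ := fun k => step (S k) with hNdef
  set B : ℕ → ℕ := fun k => ⌊ε * (N k : ℝ) + (1 + (S k : ℝ))⌋₊ with hBdef
  -- basic numeric facts
  have h1ε : (0:ℝ) < 1 - ε := by linarith
  have hceil_ge : ∀ s : ℕ, (2 + 2*s : ℕ) ≤ ⌈((2 + 2*s : ℕ) : ℝ)/(1-ε)⌉₊ := by
    intro s
    have h1 : ((2 + 2*s : ℕ):ℝ) ≤ ((2 + 2*s : ℕ) : ℝ)/(1-ε) := by
      rw [le_div_iff₀ h1ε]
      have : (0:ℝ) ≤ ((2 + 2*s : ℕ):ℝ) := Nat.cast_nonneg _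
      nlinarith
    exact_mod_cast h1.trans (Nat.le_ceil _)
  have hNlarge : ∀ k, 2 + 2 * S k < N k := fun k => lt_of_le_of_lt (hceil_ge (S k)) (hstepM (S k))
  have hNB : ∀ k, (2 + 2 * (S k : ℝ)) ≤ (1-ε) * N k := by
    intro k
    have h1 : ((2 + 2*(S k) : ℕ) : ℝ)/(1-ε) ≤ (⌈((2 + 2*(S k) : ℕ) : ℝ)/(1-ε)⌉₊ : ℝ) := Nat.le_ceil _
    have h2 : (⌈((2 + 2*(S k) : ℕ) : ℝ)/(1-ε)⌉₊ : ℝ) ≤ (N k : ℝ) := by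
      exact_mod_cast (hstepM (S k)).le
    have h3 : ((2 + 2*(S k) : ℕ) : ℝ)/(1-ε) ≤ (N k : ℝ) := h1.trans h2
    rw [div_le_iff₀ h1ε] at h3
    push_cast at h3 ⊢
    nlinarith
  have hBlb : ∀ k, ε * N k + S k ≤ (B k : ℝ) := by
    intro k
    have := Nat.lt_floor_add_one (ε * (N k:ℝ) + (1 + (S k:ℝ)))
    simp only [hBdef]
    linarith
  have hBub : ∀ k, (B k : ℝ) ≤ ε * N k + 1 + S k := by
    intro k
    have h0 : (0:ℝ) ≤ ε * (N k:ℝ) + (1 + (S k:ℝ)) := by positivity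
    have := Nat.floor_le h0
    simp only [hBdef]
    linarith
  have hSBk : ∀ k, S k ≤ B k := by
    intro k
    have h1 : (0:ℝ) ≤ ε * N k := by positivity
    have := hBlb k
    exact_mod_cast (by linarith : ((S k : ℕ):ℝ) ≤ (B k : ℝ))
  have hNeq : ∀ k, N k = step (S k) := fun _ => rfl
  have hgap : ∀ k, (∑ i ∈ Finset.Icc 1 (B k), a i) + 3 ≤ a (N k) := by
    intro k
    have h1 : (∑ i ∈ Finset.Icc 1 ⌊ε * ((N k):ℝ) + (3 + ((S k):ℝ))⌋₊, a i) < a (N k) :=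
      hstepS (S k)
    have h2 : B k + 2 ≤ ⌊ε * ((N k):ℝ) + (3 + ((S k):ℝ))⌋₊ := by
      refine Nat.le_floor ?_
      have := hBub k
      push_cast
      linarith
    have h3 : ∑ i ∈ Finset.Icc 1 (B k + 2), a i ≤
        ∑ i ∈ Finset.Icc 1 ⌊ε * ((N k):ℝ) + (3 + ((S k):ℝ))⌋₊, a i :=
      Finset.sum_le_sum_of_subset (Finset.Icc_subset_Icc_right h2)
    have h4 : ∑ i ∈ Finset.Icc 1 (B k + 2), a i =
        (∑ i ∈ Finset.Icc 1 (B k), a i) + a (B k + 1) + a (B k + 2) := by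
      rw [show B k + 2 = (B k + 1) + 1 from rfl, Finset.sum_Icc_succ_top (by omega) a,
        Finset.sum_Icc_succ_top (by omega) a]
    have h5 := hpos (B k + 1) (by omega)
    have h6 := hpos (B k + 2) (by omega)
    omega
  have hNpos : ∀ k, 1 ≤ N k := fun k => by have := hNlarge k; omega
  have hSmono : Monotone S := monotone_nat_of_le_succ (fun k => by rw [hSsucc]; omega)
  have hSN : ∀ j k, j < k → N j ≤ S k := by
    intro j k hjk
    have h1 : N j ≤ S (j+1) := by rw [hSsucc, ← hNeq]; omega
    exact h1.trans (hSmono hjk)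
  have hNmono : StrictMono N := by
    refine strictMono_nat_of_lt_succ (fun k => ?_)
    have h1 : N k ≤ S (k+1) := hSN k (k+1) (Nat.lt_succ_self k)
    have h2 := hNlarge (k+1)
    omega
  have hSsum : ∀ k, S k = ∑ j ∈ Finset.range k, N j := by
    intro k
    induction k with
    | zero => rfl
    | succ k ih => rw [Finset.sum_range_succ, ← ih, hSsucc]
  have hSk_ge : ∀ k, k ≤ S k := by
    intro k
    induction k with
    | zero => omega
    | succ k ih => have := hNpos k; rw [hSsucc, ← hNeq]; omega
  set J : Set ℕ := {i : ℕ | 1 ≤ i ∧ ∀ k : ℕ, i ≤ B k ∨ N k ≤ i} with hJdef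
  have hJ1 : J ⊆ Set.Ici 1 := fun i hi => hi.1
  -- density
  have density : ∀ m : ℕ, ε * m ≤ (((Finset.Icc 1 m).filter (· ∈ J)).card : ℝ) := by
    intro m
    have hex : ∃ k, m < N k := ⟨m+1, lt_of_lt_of_le (Nat.lt_succ_self m) hNmono.le_apply⟩
    obtain ⟨k, hk, hk'⟩ : ∃ k, m < N k ∧ ∀ j, j < k → N j ≤ m :=
      ⟨Nat.find hex, Nat.find_spec hex, fun j hj => le_of_not_gt (Nat.find_min hex hj)⟩
    have hpart : (((Finset.Icc 1 m).filter (· ∈ J)).card : ℕ) +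
        ((Finset.Icc 1 m).filter (fun i => ¬ i ∈ J)).card = m := by
      rw [Finset.card_filter_add_card_filter_not, Nat.card_Icc]
      omega
    set bad := (Finset.Icc 1 m).filter (fun i => ¬ i ∈ J) with hbaddef
    suffices hbb : (bad.card : ℝ) ≤ (1-ε) * m by
      have hgb : (((Finset.Icc 1 m).filter (· ∈ J)).card : ℝ) = m - bad.card := by
        have h : ((((Finset.Icc 1 m).filter (· ∈ J)).card : ℕ) : ℝ) + (bad.card : ℝ) = m := by
          exact_mod_cast hpart
        linarith
      rw [hgb]
      linarith
    have hbadsub : bad ⊆ (Finset.range (k+1)).biUnion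
        (fun j => (Finset.Ioo (B j) (N j)).filter (· ≤ m)) := by
      intro i hi
      simp only [hbaddef, Finset.mem_filter, Finset.mem_Icc] at hi
      obtain ⟨⟨hi1, him⟩, hiJ⟩ := hi
      have hexj : ∃ j, B j < i ∧ i < N j := by
        by_contra hno
        push_neg at hno
        refine hiJ ⟨hi1, fun kk => ?_⟩
        rcases le_or_gt i (B kk) with h | h
        · exact Or.inl h
        · exact Or.inr (hno kk h)
      obtain ⟨j, hj1, hj2⟩ := hexj
      have hjk : j ≤ k := by
        by_contra hjk
        push_neg at hjk
        have hNS : N k ≤ S j := hSN k j hjk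
        have hSB : S j ≤ B j := hSBk j
        omega
      simp only [Finset.mem_biUnion, Finset.mem_range, Finset.mem_filter, Finset.mem_Ioo]
      exact ⟨j, by omega, ⟨hj1, hj2⟩, him⟩
    have hbadcard : bad.card ≤ ∑ j ∈ Finset.range (k+1),
        ((Finset.Ioo (B j) (N j)).filter (· ≤ m)).card :=
      le_trans (Finset.card_le_card hbadsub) Finset.card_biUnion_le
    have hTle : ∀ j, ((Finset.Ioo (B j) (N j)).filter (· ≤ m)).card ≤ N j - B j - 1 := by
      intro j
      calc ((Finset.Ioo (B j) (N j)).filter (· ≤ m)).card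
          ≤ (Finset.Ioo (B j) (N j)).card := Finset.card_filter_le _ _
        _ = N j - B j - 1 := Nat.card_Ioo _ _
    have hTlem : ∀ j, ((Finset.Ioo (B j) (N j)).filter (· ≤ m)).card ≤ m - B j := by
      intro j
      calc ((Finset.Ioo (B j) (N j)).filter (· ≤ m)).card
          ≤ (Finset.Ioc (B j) m).card := by
            refine Finset.card_le_card ?_
            intro i hi
            simp only [Finset.mem_filter, Finset.mem_Ioo] at hi
            exact Finset.mem_Ioc.mpr ⟨hi.1.1, hi.2⟩
        _ = m - B j := Nat.card_Ioc _ _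
    have hrest : ∀ K, (∑ j ∈ Finset.range K, ((Finset.Ioo (B j) (N j)).filter (· ≤ m)).card)
        ≤ S K := by
      intro K
      rw [hSsum]
      refine Finset.sum_le_sum (fun j _ => ?_)
      have := hTle j
      omega
    rcases le_or_gt m (B k) with hcA | hcB
    · -- case A
      rcases Nat.eq_zero_or_pos k with hk0 | hkpos
      · subst hk0
        have : bad.card ≤ m - B 0 := by
          have := hbadcard
          simp only [zero_add, Finset.sum_range_one, Finset.range_one, Finset.sum_singleton] at this
          exact this.trans (hTlem 0)
        have hb0 : bad.card = 0 := by omega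
        rw [hb0]
        have : (0:ℝ) ≤ (m:ℝ) := Nat.cast_nonneg m
        push_cast
        nlinarith
      · obtain ⟨k', rfl⟩ : ∃ k', k = k' + 1 := ⟨k - 1, by omega⟩
        have hb1 : bad.card ≤ S k' + ((Finset.Ioo (B k') (N k')).filter (· ≤ m)).card := by
          have h1 := hbadcard
          rw [Finset.sum_range_succ, Finset.sum_range_succ] at h1
          have h2 := hrest k'
          have h4 : ((Finset.Ioo (B (k'+1)) (N (k'+1))).filter (· ≤ m)).card = 0 := by
            have := hTlem (k'+1)
            omega
          omega
        have hTk' : (((Finset.Ioo (B k') (N k')).filter (· ≤ m)).card : ℝ)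
            ≤ (1-ε) * N k' - S k' := by
          rcases le_or_gt (N k') (B k' + 1) with hc | hc
          · have h0 : ((Finset.Ioo (B k') (N k')).filter (· ≤ m)).card = 0 := by
              have := hTle k'
              omega
            rw [h0]
            have := hNB k'
            push_cast
            linarith
          · have h0 := hTle k'
            have h1 : (((Finset.Ioo (B k') (N k')).filter (· ≤ m)).card : ℝ)
                ≤ (N k' : ℝ) - B k' - 1 := by
              have h2 : ((N k' - B k' - 1 : ℕ) : ℝ) = (N k' : ℝ) - B k' - 1 := by
                have he : (N k' - B k' - 1 : ℕ) + (B k' + 1) = N k' := by omega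
                have he2 := congrArg (fun x : ℕ => (x : ℝ)) he
                push_cast at he2
                linarith
              rw [← h2]
              exact_mod_cast h0
            have h3 := hBlb k'
            linarith
        have hNk'm : N k' ≤ m := hk' k' (Nat.lt_succ_self k')
        have : (bad.card : ℝ) ≤ (S k' : ℝ) + ((1-ε) * N k' - S k') := by
          have h1 : (bad.card : ℝ) ≤ (S k' : ℝ) +
              (((Finset.Ioo (B k') (N k')).filter (· ≤ m)).card : ℝ) := by
            exact_mod_cast hb1
          linarith
        have hm' : (N k' : ℝ) ≤ m := by exact_mod_cast hNk'm
        nlinarith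
    · -- case B
      have hb1 : bad.card ≤ S k + (m - B k) := by
        have h1 := hbadcard
        rw [Finset.sum_range_succ] at h1
        have h2 := hrest k
        have h3 := hTlem k
        omega
      have hcast : ((m - B k : ℕ) : ℝ) = (m:ℝ) - B k := by
        push_cast [Nat.cast_sub hcB.le]
        ring
      have h4 : (bad.card : ℝ) ≤ (S k : ℝ) + ((m:ℝ) - B k) := by
        rw [← hcast]
        exact_mod_cast hb1
      have h5 := hBlb k
      have h6 : (m:ℝ) ≤ N k := by exact_mod_cast hk.le
      nlinarith
  -- seqCount translation
  have hJ2 : ∃ Nn : ℕ, ∀ n : ℕ, Nn ≤ n →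
      ε * (seqCount a (Set.Ici 1) n : ℝ) ≤ (seqCount a J n : ℝ) := by
    refine ⟨0, fun n _ => ?_⟩
    obtain ⟨M, hM1, hMn⟩ := hb n
    set m := Nat.findGreatest (fun i => 1 ≤ i ∧ a i ≤ n) M with hm
    have hset : {i : ℕ | 1 ≤ i ∧ a i ≤ n} = Set.Icc 1 m := by
      ext i
      simp only [Set.mem_setOf_eq, Set.mem_Icc]
      constructor
      · rintro ⟨h1, h2⟩
        refine ⟨h1, Nat.le_findGreatest ?_ ⟨h1, h2⟩⟩
        by_contra hiM
        push_neg at hiM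
        have := hmono M i hM1 hiM.le
        omega
      · rintro ⟨h1, h2⟩
        have hm1 : m ≠ 0 := by omega
        have hPm : 1 ≤ m ∧ a m ≤ n := Nat.findGreatest_of_ne_zero hm.symm hm1
        exact ⟨h1, le_trans (hmono i m h1 h2) hPm.2⟩
    have hc1 : seqCount a (Set.Ici 1) n = m := by
      unfold seqCount
      have he : {i : ℕ | i ∈ Set.Ici 1 ∧ a i ≤ n} = Set.Icc 1 m := by
        rw [← hset]; rfl
      rw [he, ← Finset.coe_Icc, Set.ncard_coe_finset, Nat.card_Icc]
      omega
    have hc2 : seqCount a J n = ((Finset.Icc 1 m).filter (· ∈ J)).card := by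
      unfold seqCount
      have he : {i : ℕ | i ∈ J ∧ a i ≤ n} = ↑((Finset.Icc 1 m).filter (· ∈ J)) := by
        ext i
        simp only [Set.mem_setOf_eq, Finset.coe_filter, Finset.mem_Icc]
        constructor
        · rintro ⟨hiJ, hin⟩
          have hi1 : 1 ≤ i := hiJ.1
          have : i ∈ Set.Icc 1 m := by rw [← hset]; exact ⟨hi1, hin⟩
          exact ⟨⟨this.1, this.2⟩, hiJ⟩
        · rintro ⟨⟨hi1, him⟩, hiJ⟩
          have : i ∈ {i : ℕ | 1 ≤ i ∧ a i ≤ n} := by rw [hset]; exact ⟨hi1, him⟩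
          exact ⟨hiJ, this.2⟩
      rw [he, Set.ncard_coe_finset]
    rw [hc1, hc2]
    exact density m
  obtain ⟨Z, hZ⟩ := hec J hJ1 hJ2
  have haN : ∀ k, k + 3 ≤ a (N k) := by
    intro k
    have h1 := hgap k
    have h2 := hsum_card (B k)
    have h3 := hSBk k
    have h4 := hSk_ge k
    omega
  have hZ3 := haN Z
  obtain ⟨T, hTJ, hTsum⟩ := hZ (a (N Z) - 1) (by omega)
  by_cases hcase : ∃ i ∈ T, N Z ≤ i
  · obtain ⟨i, hiT, hiN⟩ := hcase
    have h1 : a i ≤ a (N Z) - 1 := by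
      rw [← hTsum]
      exact Finset.single_le_sum (fun _ _ => Nat.zero_le _) hiT
    have h2 : a (N Z) ≤ a i := hmono (N Z) i (hNpos Z) hiN
    omega
  · push_neg at hcase
    have hTsub : T ⊆ Finset.Icc 1 (B Z) := by
      intro i hiT
      have hiJ : i ∈ J := hTJ hiT
      rcases hiJ.2 Z with h | h
      · exact Finset.mem_Icc.mpr ⟨hiJ.1, h⟩
      · exact absurd h (by have := hcase i hiT; omega)
    have h1 : a (N Z) - 1 ≤ ∑ i ∈ Finset.Icc 1 (B Z), a i := by
      rw [← hTsum]
      exact Finset.sum_le_sum_of_subset hTsub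
    have h2 := hgap Z
    omega
end
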